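/- Let 1 ≤ α ≤ 2 and let p : ℝ → ℝ be an odd function in C¹(ℝ) ∩ C²(ℝ∖{0}) such that p'(ξ) ∼ ξ^α and p''(ξ) ∼ ξ^{α−1} for all ξ ≥ ξ₀ (for some ξ₀ > 0). Let k ≥ 2 and let (ξ₁,…,ξ_{k+2}) ∈ ℤ^{k+2} satisfy ∑_{j=1}^{k+2} ξ_j = 0 and |ξ₁| ∼ |ξ₂| ≳ |ξ₃| ≫ k·max_{j≥4}|ξ_j|. Then the resonance function Ω = ∑_{j=1}^{k+2} p(ξ_j) satisfies |Ω| ≳ |ξ₃| |ξ₁|^α, provided |ξ₁| ≫ (max_{ξ∈[0,ξ₀]}|p'(ξ)|)^{1/α}. -/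

import Mathlib

open Set
set_option maxHeartbeats 1600000


open Real
noncomputable section

/-- non-resonance estimate (Lemma 4.6 of the paper) with explicit constants.
If `∑ ξ_j = 0`, `|ξ₁| ∼ |ξ₂| ≳ |ξ₃| ≫ k·max_{j≥4}|ξ_j|` and `|ξ₁|` is large enough, then
`|∑_j p(ξ_j)| ≳ |ξ₃| |ξ₁|^α`. -/
theorem resonance_lower_bound_1
    (α : ℝ) (hα1 : 1 ≤ α) (hα2 : α ≤ 2)
    (p : ℝ → ℝ) (ξ₀ : ℝ) (hξ₀ : 0 < ξ₀)
    (hodd : ∀ x : ℝ, p (-x) = - p x)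
    (hC1 : ContDiff ℝ 1 p) (hC2 : ContDiffOn ℝ 2 p {x : ℝ | x ≠ 0})
    (c₁ C₁ : ℝ) (hc₁ : 0 < c₁)
    (hp' : ∀ ξ : ℝ, ξ₀ ≤ ξ → c₁ * ξ ^ α ≤ deriv p ξ ∧ deriv p ξ ≤ C₁ * ξ ^ α)
    (hp'' : ∀ ξ : ℝ, ξ₀ ≤ ξ →
      c₁ * ξ ^ (α - 1) ≤ |deriv (deriv p) ξ| ∧ |deriv (deriv p) ξ| ≤ C₁ * ξ ^ (α - 1))
    (M : ℝ) (hM0 : 0 ≤ M) (hM : ∀ ξ ∈ Set.Icc (0 : ℝ) ξ₀, |deriv p ξ| ≤ M)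
    (C c : ℝ) (hC : 1 ≤ C) (hc : 0 < c) :
    ∃ K ≥ (1 : ℝ), ∃ c' > (0 : ℝ), ∀ k : ℕ, 2 ≤ k →
      ∀ ξ : Fin (k + 2) → ℤ,
        (∑ j, ξ j) = 0 →
        |((ξ 0 : ℤ) : ℝ)| ≤ C * |((ξ 1 : ℤ) : ℝ)| →
        |((ξ 1 : ℤ) : ℝ)| ≤ C * |((ξ 0 : ℤ) : ℝ)| →
        c * |((ξ 2 : ℤ) : ℝ)| ≤ |((ξ 1 : ℤ) : ℝ)| →
        (∀ j : Fin (k + 2), 3 ≤ (j : ℕ) →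
          K * k * |((ξ j : ℤ) : ℝ)| ≤ |((ξ 2 : ℤ) : ℝ)|) →
        K * M ^ (1 / α) ≤ |((ξ 0 : ℤ) : ℝ)| →
        c' * |((ξ 2 : ℤ) : ℝ)| * |((ξ 0 : ℤ) : ℝ)| ^ α
          ≤ |∑ j, p ((ξ j : ℤ) : ℝ)| := by
  have hα0 : (0:ℝ) < α := lt_of_lt_of_le one_pos hα1
  have hCpos : (0:ℝ) < C := lt_of_lt_of_le one_pos hC
  have hdp : Differentiable ℝ p := hC1.differentiable one_ne_zero
  have hcontdp : Continuous (deriv p) := hC1.continuous_deriv le_rfl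
  have hp0 : p 0 = 0 := by have := hodd 0; simp at this; linarith
  have hC₁pos : 0 < C₁ := by
    have h := hp' ξ₀ le_rfl
    nlinarith [Real.rpow_pos_of_pos hξ₀ α]
  have hMlb : c₁ * ξ₀ ^ α ≤ M :=
    le_trans (le_trans (hp' ξ₀ le_rfl).1 (le_abs_self _)) (hM ξ₀ ⟨hξ₀.le, le_rfl⟩)
  have hMpos : 0 < M := lt_of_lt_of_le (by positivity) hMlb
  have hsuper : ∀ x t : ℝ, 0 ≤ x → 0 ≤ t → x ^ α + t ^ α ≤ (x + t) ^ α := by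
    intro x t hx ht
    have h := NNReal.add_rpow_le_rpow_add x.toNNReal t.toNNReal hα1
    have h2 := NNReal.coe_le_coe.2 h
    push_cast at h2
    rwa [Real.coe_toNNReal x hx, Real.coe_toNNReal t ht] at h2
  have hopen : IsOpen {x : ℝ | x ≠ 0} := isOpen_ne
  have hreg : (∀ x : ℝ, x ≠ 0 → DifferentiableAt ℝ (deriv p) x) ∧
      ContinuousOn (deriv (deriv p)) {x : ℝ | x ≠ 0} := by
    rw [show (2 : WithTop ℕ∞) = 1 + 1 by norm_num] at hC2
    rw [contDiffOn_succ_iff_deriv_of_isOpen hopen] at hC2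
    obtain ⟨-, -, h1⟩ := hC2
    constructor
    · intro x hx
      exact ((h1.differentiableOn one_ne_zero) x hx).differentiableAt (hopen.mem_nhds hx)
    · rw [show (1 : WithTop ℕ∞) = 0 + 1 by norm_num,
        contDiffOn_succ_iff_deriv_of_isOpen hopen] at h1
      exact h1.2.2.continuousOn
  obtain ⟨hdiff2, hcont2⟩ := hreg
  have hqpos : ∀ u : ℝ, ξ₀ ≤ u → c₁ * u ^ (α - 1) ≤ deriv (deriv p) u := by
    intro u hu
    have hu0 : 0 < u := lt_of_lt_of_le hξ₀ hu
    rcases lt_or_ge 0 (deriv (deriv p) u) with hsgn | hsgn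
    · have := (hp'' u hu).1; rwa [abs_of_pos hsgn] at this
    · exfalso
      have habs : 0 < |deriv (deriv p) u| :=
        lt_of_lt_of_le (by positivity) (hp'' u hu).1
      have hqu : deriv (deriv p) u < 0 :=
        lt_of_le_of_ne hsgn (by intro h; rw [h, abs_zero] at habs; exact lt_irrefl 0 habs)
      -- pick T with c₁ T^α > C₁ u^α
      set T : ℝ := ((C₁ + c₁) / c₁) ^ (1/α) * u with hT
      have hbase : 1 < (C₁ + c₁) / c₁ := by
        rw [lt_div_iff₀ hc₁]; linarith
      have hfac : 1 < ((C₁ + c₁) / c₁) ^ (1/α) := by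
        apply Real.one_lt_rpow_iff_of_pos (by linarith) |>.2
        exact Or.inl ⟨hbase, by positivity⟩
      have hTu : u < T := lt_mul_of_one_lt_left hu0 hfac
      have hTα : c₁ * T ^ α = (C₁ + c₁) * u ^ α := by
        rw [hT, Real.mul_rpow (by positivity) hu0.le, one_div,
          Real.rpow_inv_rpow (by positivity) (ne_of_gt hα0)]
        field_simp
      have hslope : deriv p u < deriv p T := by
        have h1 := (hp' u hu).2
        have h2 := (hp' T (le_trans hu hTu.le)).1
        have : (0:ℝ) < c₁ * u ^ α := by positivity
        nlinarith
      obtain ⟨θ, hθ, hθeq⟩ := exists_deriv_eq_slope (deriv p) hTu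
        ((hC1.continuous_deriv le_rfl).continuousOn)
        (fun x hx => (hdiff2 x (ne_of_gt (lt_trans hu0 hx.1))).differentiableWithinAt)
      have hθpos : 0 < deriv (deriv p) θ := by
        rw [hθeq]
        exact div_pos (by linarith) (by linarith [hθ.1, hθ.2])
      obtain ⟨z, hz, hz0⟩ := intermediate_value_Icc (le_of_lt hθ.1)
        (hcont2.mono (fun x hx => ne_of_gt (lt_of_lt_of_le hu0 hx.1)))
        (⟨hqu.le, hθpos.le⟩ : (0:ℝ) ∈ Icc (deriv (deriv p) u) (deriv (deriv p) θ))
      have : 0 < |deriv (deriv p) z| :=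
        lt_of_lt_of_le (mul_pos hc₁ (Real.rpow_pos_of_pos (lt_of_lt_of_le hu0 hz.1) _))
          (hp'' z (le_trans hu hz.1)).1
      rw [hz0] at this
      simp at this
  have hG : MonotoneOn (fun u : ℝ => deriv p u - c₁ / α * u ^ α) (Ici ξ₀) := by
    apply monotoneOn_of_deriv_nonneg (convex_Ici _)
    · apply ContinuousOn.sub hcontdp.continuousOn
      apply ContinuousOn.mul continuousOn_const
      intro u hu
      exact (Real.continuousAt_rpow_const u α (Or.inr hα0.le)).continuousWithinAt
    · intro u hu
      rw [interior_Ici] at hu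
      have hu0 : (0:ℝ) < u := lt_of_lt_of_le hξ₀ (le_of_lt hu)
      exact ((hdiff2 u hu0.ne').sub
        (((Real.hasDerivAt_rpow_const (Or.inl hu0.ne')).differentiableAt).const_mul
          (c₁/α))).differentiableWithinAt
    · intro u hu
      rw [interior_Ici] at hu
      have hu0 : (0:ℝ) < u := lt_of_lt_of_le hξ₀ (le_of_lt hu)
      have h1 : HasDerivAt (deriv p) (deriv (deriv p) u) u := (hdiff2 u hu0.ne').hasDerivAt
      have h2 : HasDerivAt (fun u : ℝ => c₁ / α * u ^ α) (c₁ / α * (α * u ^ (α - 1))) u :=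
        (Real.hasDerivAt_rpow_const (Or.inl hu0.ne')).const_mul (c₁/α)
      rw [(show HasDerivAt (fun u : ℝ => deriv p u - c₁ / α * u ^ α) _ u from h1.sub h2).deriv]
      have : c₁ / α * (α * u ^ (α - 1)) = c₁ * u ^ (α - 1) := by field_simp
      rw [this]
      linarith [hqpos u hu.le]
  have hstep : ∀ x t : ℝ, ξ₀ ≤ t → 0 ≤ x → c₁ / 2 * x ^ α ≤ deriv p (x + t) - deriv p t := by
    intro x t ht hx
    have h1 := hG (mem_Ici.2 ht) (mem_Ici.2 (by linarith : ξ₀ ≤ x + t)) (by linarith)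
    simp only at h1
    have h2 := hsuper x t hx (by linarith)
    have h3 : c₁ / 2 ≤ c₁ / α := div_le_div_of_nonneg_left hc₁.le hα0 hα2
    have hxα : (0:ℝ) ≤ x ^ α := Real.rpow_nonneg hx α
    have htα : (0:ℝ) ≤ t ^ α := Real.rpow_nonneg (by linarith) α
    have h4 : c₁ / α * (x ^ α) ≤ c₁ / α * ((x + t) ^ α - t ^ α) := by
      apply mul_le_mul_of_nonneg_left _ (by positivity)
      linarith
    nlinarith
  have hD : ∀ x y : ℝ, ξ₀ ≤ x → 2 * M ≤ c₁ * x ^ α → 0 ≤ y →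
      c₁ / 2 * x ^ α * y ≤ p (x + y) - p x - p y := by
    intro x y hx hMx hy
    set g : ℝ → ℝ := fun t => p (x + t) - p t - c₁ / 2 * x ^ α * t with hg
    have hgd : ∀ t : ℝ, HasDerivAt g (deriv p (x + t) - deriv p t - c₁ / 2 * x ^ α) t := by
      intro t
      have h1 : HasDerivAt (fun t : ℝ => p (x + t)) (deriv p (x + t)) t := by
        have := ((hdp (x + t)).hasDerivAt).comp t ((hasDerivAt_id t).const_add x)
        simpa [Function.comp_def] using this
      have h2 : HasDerivAt (fun t : ℝ => c₁ / 2 * x ^ α * t) (c₁ / 2 * x ^ α) t := by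
        simpa using (hasDerivAt_id t).const_mul (c₁ / 2 * x ^ α)
      exact (h1.sub (hdp t).hasDerivAt).sub h2
    have hgmono : MonotoneOn g (Ici 0) := by
      apply monotoneOn_of_deriv_nonneg (convex_Ici _)
      · exact (((hdp.continuous.comp (continuous_const.add continuous_id)).sub
          hdp.continuous).sub (continuous_const.mul continuous_id)).continuousOn
      · exact fun t ht => (hgd t).differentiableAt.differentiableWithinAt
      · intro t ht
        rw [interior_Ici, mem_Ioi] at ht
        rw [(hgd t).deriv]
        rcases le_or_gt t ξ₀ with h | h
        · have ha : c₁ * (x + t) ^ α ≤ deriv p (x + t) := (hp' _ (by linarith)).1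
          have hb : deriv p t ≤ M := le_trans (le_abs_self _) (hM t ⟨ht.le, h⟩)
          have hco : x ^ α ≤ (x + t) ^ α :=
            Real.rpow_le_rpow (by linarith) (by linarith) hα0.le
          nlinarith [Real.rpow_nonneg (show (0:ℝ) ≤ x by linarith) α]
        · linarith [hstep x t h.le (by linarith : (0:ℝ) ≤ x)]
    have := hgmono (self_mem_Ici) (mem_Ici.2 hy) hy
    simp only [hg] at this
    simp only [add_zero, mul_zero, hp0] at this
    linarith
  have hp'bd : ∀ t R : ℝ, 0 ≤ t → t ≤ R → |deriv p t| ≤ M + C₁ * R ^ α := by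
    intro t R ht hR
    have hRα : (0:ℝ) ≤ C₁ * R ^ α := by
      have : (0:ℝ) ≤ R ^ α := Real.rpow_nonneg (le_trans ht hR) α
      positivity
    rcases le_or_gt t ξ₀ with h | h
    · linarith [hM t ⟨ht, h⟩]
    · have h1 := (hp' t h.le).1
      have h2 := (hp' t h.le).2
      have htα : (0:ℝ) ≤ c₁ * t ^ α := by
        have : (0:ℝ) ≤ t ^ α := Real.rpow_nonneg ht α
        positivity
      rw [abs_of_nonneg (le_trans htα h1)]
      have : t ^ α ≤ R ^ α := Real.rpow_le_rpow ht hR hα0.le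
      nlinarith
  have hLip : ∀ w₁ w₂ R : ℝ, 0 ≤ w₁ → 0 ≤ w₂ → w₁ ≤ R → w₂ ≤ R →
      |p w₁ - p w₂| ≤ (M + C₁ * R ^ α) * |w₁ - w₂| := by
    have key : ∀ w₁ w₂ R : ℝ, 0 ≤ w₁ → w₁ < w₂ → w₂ ≤ R →
        |p w₁ - p w₂| ≤ (M + C₁ * R ^ α) * |w₁ - w₂| := by
      intro w₁ w₂ R h1 h12 h2R
      obtain ⟨θ, hθ, hθeq⟩ := exists_deriv_eq_slope p h12
        hdp.continuous.continuousOn hdp.differentiableOn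
      have hpw : p w₂ - p w₁ = deriv p θ * (w₂ - w₁) := by
        rw [eq_div_iff (by intro h0; rw [sub_eq_zero] at h0; exact absurd h0.symm h12.ne : w₂ - w₁ ≠ 0)] at hθeq
        linarith
      have hθbd := hp'bd θ R (le_trans h1 hθ.1.le) (le_trans hθ.2.le h2R)
      rw [abs_sub_comm, hpw, abs_mul, abs_sub_comm w₁ w₂]
      exact mul_le_mul_of_nonneg_right hθbd (abs_nonneg _)
    intro w₁ w₂ R h1 h2 h1R h2R
    rcases lt_trichotomy w₁ w₂ with h | h | h
    · exact key w₁ w₂ R h1 h h2R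
    · simp [h]
    · rw [abs_sub_comm, abs_sub_comm w₁ w₂]
      exact key w₂ w₁ R h2 h h1R
  have hU0 : ∀ t : ℝ, 0 ≤ t → |p t| ≤ M * ξ₀ + C₁ * t ^ (α + 1) := by
    have hsmall : ∀ t : ℝ, 0 ≤ t → t ≤ ξ₀ → |p t| ≤ M * t := by
      intro t ht htξ
      rcases eq_or_lt_of_le ht with h | h
      · simp [← h, hp0]
      · obtain ⟨θ, hθ, hθeq⟩ := exists_deriv_eq_slope p h
          hdp.continuous.continuousOn hdp.differentiableOn
        have hpw : p t - p 0 = deriv p θ * (t - 0) := by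
          rw [eq_div_iff (by intro h0; rw [sub_eq_zero] at h0; exact absurd h0.symm h.ne : t - 0 ≠ 0)] at hθeq
          linarith
        have hθbd := hM θ ⟨hθ.1.le, le_trans hθ.2.le htξ⟩
        rw [show p t = p t - p 0 by rw [hp0]; ring, hpw, sub_zero, abs_mul, abs_of_pos h]
        exact mul_le_mul_of_nonneg_right hθbd h.le
    intro t ht
    rcases le_or_gt t ξ₀ with h | h
    · have := hsmall t ht h
      have h2 : M * t ≤ M * ξ₀ := mul_le_mul_of_nonneg_left h hM0
      have h3 : (0:ℝ) ≤ C₁ * t ^ (α+1) := by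
        have : (0:ℝ) ≤ t ^ (α+1) := Real.rpow_nonneg ht _
        positivity
      linarith
    · -- p is monotone on [ξ₀, ∞) and below M ξ₀ + C₁ t^(α+1)
      have hmono1 : MonotoneOn p (Ici ξ₀) := by
        apply monotoneOn_of_deriv_nonneg (convex_Ici _) hdp.continuous.continuousOn
          hdp.differentiableOn
        intro u hu
        rw [interior_Ici, mem_Ioi] at hu
        have := (hp' u hu.le).1
        have : (0:ℝ) ≤ c₁ * u ^ α := by
          have : (0:ℝ) ≤ u ^ α := Real.rpow_nonneg (by linarith [hξ₀]) α
          positivity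
        linarith [(hp' u hu.le).1]
      have hmono2 : MonotoneOn (fun u : ℝ => M * ξ₀ + C₁ * u ^ (α+1) - p u) (Ici ξ₀) := by
        apply monotoneOn_of_deriv_nonneg (convex_Ici _)
        · apply ContinuousOn.sub _ hdp.continuous.continuousOn
          apply ContinuousOn.add continuousOn_const
          apply ContinuousOn.mul continuousOn_const
          intro u hu
          exact (Real.continuousAt_rpow_const u (α+1) (Or.inr (by linarith))).continuousWithinAt
        · intro u hu
          rw [interior_Ici, mem_Ioi] at hu
          have hu0 : (0:ℝ) < u := lt_trans hξ₀ hu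
          exact ((((Real.hasDerivAt_rpow_const
            (Or.inl hu0.ne')).differentiableAt.const_mul C₁).const_add
              (M * ξ₀)).sub (hdp u)).differentiableWithinAt
        · intro u hu
          rw [interior_Ici, mem_Ioi] at hu
          have hu0 : (0:ℝ) < u := lt_trans hξ₀ hu
          have h1 : HasDerivAt (fun u : ℝ => M * ξ₀ + C₁ * u ^ (α+1))
              (C₁ * ((α+1) * u ^ (α + 1 - 1))) u :=
            ((Real.hasDerivAt_rpow_const (Or.inl hu0.ne')).const_mul C₁).const_add (M * ξ₀)
          rw [(show HasDerivAt (fun u : ℝ => M * ξ₀ + C₁ * u ^ (α+1) - p u) _ u from h1.sub (hdp u).hasDerivAt).deriv]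
          have h2 := (hp' u hu.le).2
          have huα : (0:ℝ) ≤ u ^ α := Real.rpow_nonneg hu0.le α
          rw [show α + 1 - 1 = α by ring]
          nlinarith [mul_nonneg (mul_nonneg hα0.le hC₁pos.le) huα]
      have hpξ₀ : |p ξ₀| ≤ M * ξ₀ := hsmall ξ₀ hξ₀.le le_rfl
      have hlow : -(M * ξ₀) ≤ p t := by
        have := hmono1 (self_mem_Ici) (mem_Ici.2 h.le) h.le
        have h2 := (abs_le.1 hpξ₀).1
        linarith
      have hhigh : p t ≤ M * ξ₀ + C₁ * t ^ (α+1) := by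
        have := hmono2 (self_mem_Ici) (mem_Ici.2 h.le) h.le
        simp only at this
        have h2 := (abs_le.1 hpξ₀).2
        have h3 : (0:ℝ) ≤ C₁ * ξ₀ ^ (α+1) := by
          have : (0:ℝ) ≤ ξ₀ ^ (α+1) := Real.rpow_nonneg hξ₀.le _
          positivity
        linarith
      have h3 : (0:ℝ) ≤ C₁ * t ^ (α+1) := by
        have : (0:ℝ) ≤ t ^ (α+1) := Real.rpow_nonneg (by linarith) _
        positivity
      rw [abs_le]
      constructor <;> linarith
  have hU : ∀ t : ℝ, |p t| ≤ M * ξ₀ + C₁ * |t| ^ (α + 1) := by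
    intro t
    rcases le_or_gt 0 t with h | h
    · rw [abs_of_nonneg h]; exact hU0 t h
    · have h1 : p t = -(p (-t)) := by rw [← hodd]; ring_nf
      rw [h1, abs_neg, abs_of_neg h]
      exact hU0 (-t) (by linarith)
  set γ : ℝ := 2*C/c + 2*C + 2 with hγdef
  have hγpos : 0 < γ := by positivity
  have hγ1 : (1:ℝ) ≤ γ := by
    rw [hγdef]; have : (0:ℝ) ≤ 2*C/c := by positivity
    linarith
  have hγc : γ * c = 2*C + 2*C*c + 2*c := by
    rw [hγdef]
    field_simp
  have hγC : 1 + C ≤ γ := by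
    rw [hγdef]; have : (0:ℝ) ≤ 2*C/c := by positivity
    linarith
  set c₃ : ℝ := min (c₁*c/4) (c₁/(8*C^2)) with hc₃def
  have hc₃pos : 0 < c₃ := lt_min (by positivity) (by positivity)
  have hc₃1 : c₃ ≤ c₁*c/4 := min_le_left _ _
  have hc₃2 : c₃ ≤ c₁/(8*C^2) := min_le_right _ _
  set K : ℝ := 2 + 2*C^2/c₁ + (1 + C₁*γ^2) * (4/(c₁*c) + 8*C^2/c₁)
      + 4*(ξ₀ + C₁*(C/c+1)^2)/c₃ with hKdef
  have hEpos : (0:ℝ) < 1 + C₁*γ^2 := by positivity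
  have hnn1 : (0:ℝ) ≤ 2*C^2/c₁ := by positivity
  have hnn2 : (0:ℝ) ≤ (1 + C₁*γ^2) * (4/(c₁*c) + 8*C^2/c₁) := by positivity
  have hnn3 : (0:ℝ) ≤ 4*(ξ₀ + C₁*(C/c+1)^2)/c₃ := by positivity
  have hK2 : (2:ℝ) ≤ K := by rw [hKdef]; linarith
  have hK1 : (1:ℝ) ≤ K := by linarith
  have hKpos : (0:ℝ) < K := by linarith
  have hK_A : 2*C^2/c₁ ≤ K := by rw [hKdef]; linarith
  have hK_B : (1 + C₁*γ^2) * (4/(c₁*c)) ≤ K := by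
    rw [hKdef]
    have h4 : (1 + C₁*γ^2) * (4/(c₁*c)) ≤ (1 + C₁*γ^2) * (4/(c₁*c) + 8*C^2/c₁) := by
      apply mul_le_mul_of_nonneg_left _ hEpos.le
      have : (0:ℝ) ≤ 8*C^2/c₁ := by positivity
      linarith
    linarith
  have hK_C : (1 + C₁*γ^2) * (8*C^2/c₁) ≤ K := by
    rw [hKdef]
    have h4 : (1 + C₁*γ^2) * (8*C^2/c₁) ≤ (1 + C₁*γ^2) * (4/(c₁*c) + 8*C^2/c₁) := by
      apply mul_le_mul_of_nonneg_left _ hEpos.le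
      have : (0:ℝ) ≤ 4/(c₁*c) := by positivity
      linarith
    linarith
  have hK_D : 4*(ξ₀ + C₁*(C/c+1)^2)/c₃ ≤ K := by rw [hKdef]; linarith
  -- product forms
  have hKA' : 2*C^2 ≤ K * c₁ := by
    have := mul_le_mul_of_nonneg_right hK_A hc₁.le
    rw [div_mul_cancel₀ _ hc₁.ne'] at this
    linarith
  have hKB' : (1 + C₁*γ^2)*4 ≤ K*(c₁*c) := by
    have := mul_le_mul_of_nonneg_right hK_B (mul_pos hc₁ hc).le
    rw [mul_assoc, div_mul_cancel₀ _ (mul_pos hc₁ hc).ne'] at this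
    linarith
  have hKC' : (1 + C₁*γ^2)*(8*C^2) ≤ K*c₁ := by
    have := mul_le_mul_of_nonneg_right hK_C hc₁.le
    rw [mul_assoc, div_mul_cancel₀ _ hc₁.ne'] at this
    linarith
  have hKD' : 4*(ξ₀ + C₁*(C/c+1)^2) ≤ K*c₃ := by
    have := mul_le_mul_of_nonneg_right hK_D hc₃pos.le
    rw [div_mul_cancel₀ _ hc₃pos.ne'] at this
    linarith
  clear_value K γ c₃
  clear hKdef hγdef hc₃def hK_A hK_B hK_C hK_D hnn1 hnn2 hnn3
  have hC2α : C ^ α ≤ C^2 := by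
    calc C ^ α ≤ C ^ (2:ℝ) := Real.rpow_le_rpow_of_exponent_le hC hα2
    _ = C^2 := by rw [show (2:ℝ) = ((2:ℕ):ℝ) by norm_num, Real.rpow_natCast]
  have hγ2α : γ ^ α ≤ γ^2 := by
    calc γ ^ α ≤ γ ^ (2:ℝ) := Real.rpow_le_rpow_of_exponent_le hγ1 hα2
    _ = γ^2 := by rw [show (2:ℝ) = ((2:ℕ):ℝ) by norm_num, Real.rpow_natCast]
  -- MAIN three-term estimate
  have main : ∀ a b r s : ℝ, a + b + r + s = 0 → 0 < r → |a| ≤ C * |b| →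
      |b| ≤ C * |a| → c * r ≤ |b| → |s| ≤ r / K → K * M ^ (1/α) ≤ |a| →
      c₃ * r * |a| ^ α ≤ |p a + p b + p r| := by
    intro a b r s hsum hr hab hba hrb hs hN
    set N : ℝ := |a| with hNdef
    have hN0 : (0:ℝ) ≤ N := abs_nonneg a
    have hNpos : 0 < N :=
      lt_of_lt_of_le (mul_pos hKpos (Real.rpow_pos_of_pos hMpos _)) hN
    set P : ℝ := N ^ α with hPdef
    have hPpos : 0 < P := Real.rpow_pos_of_pos hNpos α
    clear_value N P
    have hKM : K * M ≤ P := by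
      have h0 : (0:ℝ) ≤ K * M ^ (1/α) := by positivity
      have h1 : (K * M ^ (1/α)) ^ α ≤ N ^ α := Real.rpow_le_rpow h0 hN hα0.le
      rw [Real.mul_rpow hKpos.le (Real.rpow_nonneg hM0 _), one_div,
        Real.rpow_inv_rpow hM0 hα0.ne'] at h1
      have h2 : K ≤ K ^ α := by
        calc K = K ^ (1:ℝ) := (Real.rpow_one K).symm
        _ ≤ K ^ α := Real.rpow_le_rpow_of_exponent_le hK1 hα1
      have h3 := mul_le_mul_of_nonneg_right h2 hM0
      rw [hPdef]
      linarith
    have hMP : M ≤ P := by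
      have := mul_le_mul_of_nonneg_right hK1 hM0
      rw [one_mul] at this
      linarith
    have hNCα : P / C^2 ≤ (N/C) ^ α := by
      rw [hPdef, Real.div_rpow hN0 hCpos.le]
      exact div_le_div_of_nonneg_left (Real.rpow_nonneg hN0 α)
        (Real.rpow_pos_of_pos hCpos α) hC2α
    have hXM : 2*M ≤ c₁ * (N/C) ^ α := by
      have e1 : 2*M ≤ c₁ * (P / C^2) := by
        rw [mul_div_assoc' c₁ P (C^2), le_div_iff₀ (by positivity : (0:ℝ) < C^2)]
        linarith [mul_le_mul_of_nonneg_left hKM hc₁.le,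
          mul_le_mul_of_nonneg_right hKA' hM0]
      linarith [mul_le_mul_of_nonneg_left hNCα hc₁.le]
    have hXξ : ξ₀ ≤ N / C := by
      by_contra hcon
      push_neg at hcon
      have h1 : (N/C) ^ α < ξ₀ ^ α :=
        Real.rpow_lt_rpow (by positivity) hcon hα0
      have h2 : ξ₀ ^ α ≤ P / C^2 := by
        rw [le_div_iff₀ (by positivity : (0:ℝ) < C^2)]
        linarith [mul_le_mul_of_nonneg_right hKA' (Real.rpow_nonneg hξ₀.le α),
          mul_le_mul_of_nonneg_left hMlb hKpos.le, hKM]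
      linarith
    have hXN : ξ₀ ≤ N := le_trans hXξ (div_le_self hN0 hC)
    have hNCP : (N/C) ^ α ≤ P := by
      rw [hPdef]
      exact Real.rpow_le_rpow (by positivity) (div_le_self hN0 hC) hα0.le
    have hXMN : 2*M ≤ c₁ * N ^ α := by
      rw [← hPdef]
      linarith [mul_le_mul_of_nonneg_left hNCP hc₁.le, hXM]
    have hs2 : |s| ≤ r / 2 := le_trans hs (div_le_div_of_nonneg_left hr.le two_pos hK2)
    have hsabs := abs_le.1 hs2
    have hrN : c * r ≤ C * N := le_trans hrb hba
    have hγNr : 2*r ≤ γ * N := by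
      have h2 : 2*C*N ≤ γ*N*c := by
        rw [show γ*N*c = (γ*c)*N by ring, hγc]
        linarith only [mul_nonneg (mul_nonneg hCpos.le hc.le) hN0, mul_nonneg hc.le hN0]
      have h1 : 2*r*c ≤ 2*C*N := by linarith
      exact le_of_mul_le_mul_right (by linarith) hc
    have hrγN : r ≤ γ*N := by linarith
    have hErr : ∀ w₁ w₂ : ℝ, 0 ≤ w₁ → 0 ≤ w₂ → w₁ ≤ γ*N → w₂ ≤ γ*N →
        |p w₁ - p w₂| ≤ (1 + C₁*γ^2) * P * |w₁ - w₂| := by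
      intro w₁ w₂ h1 h2 h1g h2g
      have h := hLip w₁ w₂ (γ*N) h1 h2 h1g h2g
      have hγN : (γ*N) ^ α ≤ γ^2 * P := by
        rw [hPdef, Real.mul_rpow hγpos.le hN0]
        exact mul_le_mul_of_nonneg_right hγ2α (Real.rpow_nonneg hN0 α)
      have hcoef : M + C₁*(γ*N) ^ α ≤ (1 + C₁*γ^2) * P := by
        have h3 := mul_le_mul_of_nonneg_left hγN hC₁pos.le
        linarith only [h3, hMP]
      exact le_trans h (mul_le_mul_of_nonneg_right hcoef (abs_nonneg _))
    have hbud1 : (1 + C₁*γ^2) * P * (r/K) ≤ c₁*c/4 * (r*P) := by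
      rw [show (1 + C₁*γ^2) * P * (r/K) = ((1 + C₁*γ^2) * P * r)/K by ring,
        div_le_iff₀ hKpos]
      linarith [mul_le_mul_of_nonneg_right hKB' (mul_nonneg hr.le hPpos.le)]
    have hbud2 : (1 + C₁*γ^2) * P * (r/K) ≤ c₁/(8*C^2) * (r*P) := by
      rw [show (1 + C₁*γ^2) * P * (r/K) = ((1 + C₁*γ^2) * P * r)/K by ring,
        div_le_iff₀ hKpos, show c₁/(8*C^2) * (r*P) * K = (c₁*(r*P)*K)/(8*C^2) by ring,
        le_div_iff₀ (by positivity : (0:ℝ) < 8*C^2)]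
      linarith [mul_le_mul_of_nonneg_right hKC' (mul_nonneg hr.le hPpos.le)]
    -- opposite-sign case helper
    have hopp : ∀ u v : ℝ, 0 < u → u - v + r + s = 0 → N/C ≤ u →
        c₃ * r * P ≤ |p u - p v + p r| := by
      intro u v hu huv huN
      set w : ℝ := r + s with hwdef
      have hw1 : r/2 ≤ w := by rw [hwdef]; linarith [hsabs.1]
      have hw2 : w ≤ 2*r := by rw [hwdef]; linarith [hsabs.2]
      have hw0 : 0 ≤ w := by linarith
      have hvw : v = u + w := by rw [hwdef]; linarith
      have hu_ξ : ξ₀ ≤ u := le_trans hXξ huN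
      have huα : (N/C) ^ α ≤ u ^ α :=
        Real.rpow_le_rpow (by positivity) huN hα0.le
      have hu_M : 2*M ≤ c₁ * u ^ α :=
        le_trans hXM (mul_le_mul_of_nonneg_left huα hc₁.le)
      have hDuw := hD u w hu_ξ hu_M hw0
      have hmain : c₁/(4*C^2) * (r*P) ≤ c₁/2 * u ^ α * w := by
        have h1 : (P/C^2) * (r/2) ≤ u ^ α * w := by
          apply mul_le_mul (le_trans hNCα huα) hw1 (by linarith) (Real.rpow_nonneg (by positivity) α)
        calc c₁/(4*C^2) * (r*P) = c₁/2 * ((P/C^2) * (r/2)) := by ring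
        _ ≤ c₁/2 * (u ^ α * w) := mul_le_mul_of_nonneg_left h1 (by positivity)
        _ = c₁/2 * u ^ α * w := by ring
      have herr : |p w - p r| ≤ c₁/(8*C^2) * (r*P) := by
        have h := hErr w r hw0 hr.le (by linarith) hrγN
        have hws : |w - r| ≤ r/K := by
          rw [show w - r = s by rw [hwdef]; ring]
          exact hs
        have h2 : (1 + C₁*γ^2) * P * |w - r| ≤ (1 + C₁*γ^2) * P * (r/K) :=
          mul_le_mul_of_nonneg_left hws (by positivity)
        linarith only [h, h2, hbud2]
      have hsplit : p u - p v + p r = -(p (u+w) - p u - p w) + (p r - p w) := by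
        rw [hvw]; ring
      have hfin : p u - p v + p r ≤ -(c₁/(8*C^2) * (r*P)) := by
        rw [hsplit]
        have h1 : c₁/(4*C^2) * (r*P) ≤ p (u+w) - p u - p w := le_trans hmain hDuw
        have h2 : p r - p w ≤ c₁/(8*C^2) * (r*P) := by
          have := (abs_le.1 herr).2
          have h3 : |p r - p w| ≤ c₁/(8*C^2)*(r*P) := by rwa [abs_sub_comm]
          linarith [(abs_le.1 h3).2, le_abs_self (p r - p w)]
        have heq : c₁/(4*C^2)*(r*P) = 2*(c₁/(8*C^2)*(r*P)) := by ring
        linarith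
      have hc₃rP : c₃ * r * P ≤ c₁/(8*C^2) * (r*P) := by
        have := mul_le_mul_of_nonneg_right hc₃2 (mul_nonneg hr.le hPpos.le)
        calc c₃ * r * P = c₃ * (r*P) := by ring
        _ ≤ c₁/(8*C^2) * (r*P) := this
      calc c₃ * r * P ≤ c₁/(8*C^2) * (r*P) := hc₃rP
      _ ≤ -(p u - p v + p r) := by linarith
      _ ≤ |p u - p v + p r| := neg_le_abs _
    -- sign analysis
    have hane : a ≠ 0 := by
      intro h
      rw [hNdef, h, abs_zero] at hNpos
      exact lt_irrefl 0 hNpos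
    have hbne : b ≠ 0 := by
      intro h
      rw [h, abs_zero, mul_zero] at hab
      have : N ≤ 0 := hab
      linarith
    have hbN : N/C ≤ |b| := by
      rw [div_le_iff₀ hCpos]
      linarith [hba]
    rcases hane.lt_or_gt with ha | ha <;> rcases hbne.lt_or_gt with hb | hb
    · -- a < 0, b < 0
      set x : ℝ := -a with hxdef
      set y : ℝ := -b with hydef
      have hxN : x = N := by rw [hxdef, hNdef, abs_of_neg ha]
      have hyb : y = |b| := by rw [hydef, abs_of_neg hb]
      have hy0 : 0 ≤ y := by rw [hyb]; exact abs_nonneg b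
      have hxy : x + y = r + s := by rw [hxdef, hydef]; linarith
      have hDxy := hD x y (by rw [hxN]; exact hXN) (by rw [hxN]; exact hXMN) hy0
      have hyc : c * r ≤ y := by rw [hyb]; exact hrb
      have hmain2 : c₁*c/2 * (r*P) ≤ c₁/2 * x ^ α * y := by
        have hxα : x ^ α = P := by rw [hxN, hPdef]
        rw [hxα]
        calc c₁*c/2 * (r*P) = c₁/2 * P * (c*r) := by ring
        _ ≤ c₁/2 * P * y := mul_le_mul_of_nonneg_left hyc (by positivity)
      have hxyγ : x + y ≤ γ*N := by
        have h1 : y ≤ C*N := by rw [hyb]; exact hba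
        have h2 : (1+C)*N ≤ γ*N := mul_le_mul_of_nonneg_right hγC hN0
        rw [hxN]
        linarith
      have herr2 : |p (x+y) - p r| ≤ c₁*c/4 * (r*P) := by
        have h := hErr (x+y) r (by rw [hxN]; linarith) hr.le hxyγ hrγN
        have hws : |x + y - r| ≤ r/K := by
          rw [show x + y - r = s by linarith]
          exact hs
        have h2 : (1 + C₁*γ^2) * P * |x+y-r| ≤ (1 + C₁*γ^2) * P * (r/K) :=
          mul_le_mul_of_nonneg_left hws (by positivity)
        linarith only [h, h2, hbud1]
      have hval : p a + p b + p r = p r - p x - p y := by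
        have h1 : p a = -(p x) := by rw [hxdef, ← hodd, neg_neg]
        have h2 : p b = -(p y) := by rw [hydef, ← hodd, neg_neg]
        rw [h1, h2]; ring
      have hfin : c₃ * r * P ≤ p a + p b + p r := by
        rw [hval]
        have hD2 : c₁*c/2 * (r*P) ≤ p (x+y) - p x - p y := le_trans hmain2 hDxy
        have h3 := (abs_le.1 herr2).2
        have h4 := (abs_le.1 herr2).1
        have h5 : c₃ * r * P ≤ c₁*c/4 * (r*P) := by
          have := mul_le_mul_of_nonneg_right hc₃1 (mul_nonneg hr.le hPpos.le)
          calc c₃ * r * P = c₃ * (r*P) := by ring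
          _ ≤ c₁*c/4 * (r*P) := this
        have : p r - p x - p y = (p (x+y) - p x - p y) - (p (x+y) - p r) := by ring
        rw [this]
        linarith
      exact le_trans hfin (le_abs_self _)
    · -- a < 0, b > 0 : u = b, v = -a
      have h := hopp b (-a) hb (by linarith) (by rw [abs_of_pos hb] at hbN; exact hbN)
      have hval : p b - p (-a) + p r = p a + p b + p r := by
        rw [hodd]; ring
      rwa [hval] at h
    · -- a > 0, b < 0 : u = a, v = -b
      have haN : N/C ≤ a := by
        rw [hNdef, abs_of_pos ha] at *
        exact le_trans (div_le_self ha.le hC) le_rfl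
      have h := hopp a (-b) ha (by linarith) haN
      have hval : p a - p (-b) + p r = p a + p b + p r := by
        rw [hodd]; ring
      rwa [hval] at h
    · -- a > 0, b > 0 : contradiction
      exfalso
      linarith [hsabs.1]
  refine ⟨K, hK1, c₃/2, by positivity, ?_⟩
  intro k hk ξ hsum0 hab hba hrb hsm hbig
  obtain ⟨m, rfl⟩ : ∃ m, k = m + 2 := ⟨k - 2, by omega⟩
  have hsplit : ∀ (f : Fin (m + 2 + 2) → ℝ),
      (∑ j, f j) = f 0 + f 1 + f 2 + ∑ i : Fin (m + 1), f i.succ.succ.succ := by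
    intro f
    rw [Fin.sum_univ_succ, Fin.sum_univ_succ, Fin.sum_univ_succ]
    simp [Fin.succ_zero_eq_one, Fin.succ_one_eq_two]
    ring
  set a : ℝ := ((ξ 0 : ℤ) : ℝ) with hadef
  set b : ℝ := ((ξ 1 : ℤ) : ℝ) with hbdef
  set r : ℝ := ((ξ 2 : ℤ) : ℝ) with hrdef
  set S : ℝ := ∑ i : Fin (m + 1), ((ξ i.succ.succ.succ : ℤ) : ℝ) with hSdef
  set T : ℝ := ∑ i : Fin (m + 1), p ((ξ i.succ.succ.succ : ℤ) : ℝ) with hTdef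
  -- trivial case ξ 2 = 0
  by_cases hr0 : (ξ 2 : ℤ) = 0
  · rw [hrdef, hr0]
    simp only [Int.cast_zero, abs_zero, mul_zero, zero_mul]
    exact abs_nonneg _
  -- sum identity
  have hsumR : a + b + r + S = 0 := by
    have h0 := congrArg (fun z : ℤ => (z : ℝ)) hsum0
    push_cast at h0
    rw [hsplit (fun j => ((ξ j : ℤ) : ℝ))] at h0
    exact h0
  have hRpos : 0 < |r| := by
    rw [hrdef, abs_pos]
    exact_mod_cast hr0
  set kR : ℝ := ((m + 2 : ℕ) : ℝ) with hkRdef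
  have hkR2 : (2:ℝ) ≤ kR := by rw [hkRdef]; push_cast; linarith
  have hkRm : ((m:ℝ) + 1) ≤ kR := by rw [hkRdef]; push_cast; linarith
  have hkRpos : (0:ℝ) < kR := by linarith
  set D : ℝ := K * kR with hDdef
  have hDpos : 0 < D := mul_pos hKpos hkRpos
  have hD1 : (1:ℝ) ≤ D := by
    have h := mul_le_mul hK1 hkR2 (by norm_num) hKpos.le
    rw [hDdef]; linarith only [h]
  have hKD : K ≤ D := by
    have h := mul_le_mul_of_nonneg_left (le_trans one_le_two hkR2) hKpos.le
    rw [hDdef]; linarith only [h]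
  have hjb : ∀ i : Fin (m + 1), D * |((ξ i.succ.succ.succ : ℤ) : ℝ)| ≤ |r| := by
    intro i
    have h3 : 3 ≤ ((i.succ.succ.succ : Fin (m + 2 + 2)) : ℕ) := by
      simp [Fin.val_succ]
    have := hsm i.succ.succ.succ h3
    rw [hDdef, hkRdef]
    exact_mod_cast this
  have hjb' : ∀ i : Fin (m + 1), |((ξ i.succ.succ.succ : ℤ) : ℝ)| ≤ |r| / D := by
    intro i
    rw [le_div_iff₀ hDpos]
    linarith only [hjb i]
  have hS : |S| ≤ |r| / K := by
    have h1 : |S| ≤ ∑ i : Fin (m + 1), |((ξ i.succ.succ.succ : ℤ) : ℝ)| := by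
      rw [hSdef]; exact Finset.abs_sum_le_sum_abs _ _
    have h2 : ∑ i : Fin (m + 1), |((ξ i.succ.succ.succ : ℤ) : ℝ)|
        ≤ ∑ _i : Fin (m + 1), |r| / D := Finset.sum_le_sum (fun i _ => hjb' i)
    have h3 : ∑ _i : Fin (m + 1), |r| / D = ((m:ℝ) + 1) * (|r| / D) := by
      rw [Finset.sum_const, Finset.card_univ, Fintype.card_fin, nsmul_eq_mul]
      push_cast
      ring
    have h4 : ((m:ℝ) + 1) * (|r| / D) ≤ |r| / K := by
      rw [hDdef]
      rw [show ((m:ℝ)+1) * (|r| / (K * kR)) = ((m+1)/kR) * (|r|/K) by field_simp]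
      have h5 : ((m:ℝ)+1)/kR ≤ 1 := (div_le_one hkRpos).2 hkRm
      have h6 : (0:ℝ) ≤ |r|/K := by positivity
      linarith only [mul_le_mul_of_nonneg_right h5 h6]
    linarith only [h1, h2, h3, h4]
    -- derived: K*M <= |a|^alpha
  have hNpos : 0 < |a| :=
    lt_of_lt_of_le (mul_pos hKpos (Real.rpow_pos_of_pos hMpos _)) hbig
  have hPpos : 0 < |a| ^ α := Real.rpow_pos_of_pos hNpos α
  have hKM : K * M ≤ |a| ^ α := by
    have h0 : (0:ℝ) ≤ K * M ^ (1/α) := by positivity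
    have h1 : (K * M ^ (1/α)) ^ α ≤ |a| ^ α := Real.rpow_le_rpow h0 hbig hα0.le
    rw [Real.mul_rpow hKpos.le (Real.rpow_nonneg hM0 _), one_div,
      Real.rpow_inv_rpow hM0 hα0.ne'] at h1
    have h2 : K ≤ K ^ α := by
      calc K = K ^ (1:ℝ) := (Real.rpow_one K).symm
      _ ≤ K ^ α := Real.rpow_le_rpow_of_exponent_le hK1 hα1
    have h3 := mul_le_mul_of_nonneg_right h2 hM0
    linarith only [h1, h3]
  have hβ1 : (1:ℝ) ≤ C/c + 1 := by
    have : (0:ℝ) ≤ C/c := by positivity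
    linarith
  have hβP : |r| ^ α ≤ (C/c+1)^2 * |a| ^ α := by
    have hrβ : |r| ≤ (C/c+1) * |a| := by
      have h1 : c * |r| ≤ C * |a| := le_trans hrb hba
      have h2 : ((C/c+1) * |a|) * c = C * |a| + c * |a| := by
        field_simp
      have h3 : c * |r| ≤ ((C/c+1) * |a|) * c := by
        rw [h2]
        linarith only [h1, mul_nonneg hc.le (abs_nonneg a)]
      exact le_of_mul_le_mul_right (by linarith only [h3]) hc
    have h1 : |r| ^ α ≤ ((C/c+1) * |a|) ^ α :=
      Real.rpow_le_rpow (abs_nonneg r) hrβ hα0.le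
    have h2 : ((C/c+1) * |a|) ^ α = (C/c+1) ^ α * |a| ^ α :=
      Real.mul_rpow (by positivity) (abs_nonneg a)
    have h3 : (C/c+1) ^ α ≤ (C/c+1)^2 := by
      calc (C/c+1) ^ α ≤ (C/c+1) ^ (2:ℝ) := Real.rpow_le_rpow_of_exponent_le hβ1 hα2
      _ = (C/c+1)^2 := by rw [show (2:ℝ) = ((2:ℕ):ℝ) by norm_num, Real.rpow_natCast]
    calc |r| ^ α ≤ (C/c+1) ^ α * |a| ^ α := by rw [← h2]; exact h1
    _ ≤ (C/c+1)^2 * |a| ^ α := mul_le_mul_of_nonneg_right h3 hPpos.le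
  have hT : |T| ≤ c₃/2 * |r| * |a| ^ α := by
    by_cases hall : ∀ i : Fin (m + 1), ξ i.succ.succ.succ = 0
    · have hT0 : T = 0 := by
        rw [hTdef]
        apply Finset.sum_eq_zero
        intro i _
        rw [hall i]
        simpa using hp0
      rw [hT0, abs_zero]
      positivity
    · push_neg at hall
      obtain ⟨i₀, hi₀⟩ := hall
      have hD_le_R : D ≤ |r| := by
        have h1 : (1:ℝ) ≤ |((ξ i₀.succ.succ.succ : ℤ) : ℝ)| := by
          have h0 : (1:ℤ) ≤ |ξ i₀.succ.succ.succ| := Int.one_le_abs (by exact hi₀)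
          have h0' : ((1:ℤ):ℝ) ≤ ((|ξ i₀.succ.succ.succ| : ℤ) : ℝ) := by exact_mod_cast h0
          rw [Int.cast_abs] at h0'
          simpa using h0'
        have h2 := hjb i₀
        linarith only [h2, mul_le_mul_of_nonneg_left h1 hDpos.le]
      have hterm : ∀ i : Fin (m + 1), |p ((ξ i.succ.succ.succ : ℤ) : ℝ)|
          ≤ M * ξ₀ + C₁ * (|r|/D) ^ (α+1) := by
        intro i
        refine le_trans (hU _) ?_
        have h1 : |((ξ i.succ.succ.succ : ℤ) : ℝ)| ^ (α+1) ≤ (|r|/D) ^ (α+1) :=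
          Real.rpow_le_rpow (abs_nonneg _) (hjb' i) (by linarith)
        linarith only [mul_le_mul_of_nonneg_left h1 hC₁pos.le]
      have hsum1 : |T| ≤ ((m:ℝ)+1) * (M * ξ₀ + C₁ * (|r|/D) ^ (α+1)) := by
        have h1 : |T| ≤ ∑ i : Fin (m + 1), |p ((ξ i.succ.succ.succ : ℤ) : ℝ)| := by
          rw [hTdef]; exact Finset.abs_sum_le_sum_abs _ _
        have h2 : ∑ i : Fin (m + 1), |p ((ξ i.succ.succ.succ : ℤ) : ℝ)|
            ≤ ∑ _i : Fin (m + 1), (M * ξ₀ + C₁ * (|r|/D) ^ (α+1)) :=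
          Finset.sum_le_sum (fun i _ => hterm i)
        have h3 : ∑ _i : Fin (m + 1), (M * ξ₀ + C₁ * (|r|/D) ^ (α+1))
            = ((m:ℝ)+1) * (M * ξ₀ + C₁ * (|r|/D) ^ (α+1)) := by
          rw [Finset.sum_const, Finset.card_univ, Fintype.card_fin, nsmul_eq_mul]
          push_cast
          ring
        linarith only [h1, h2, h3]
      have hm1D : ((m:ℝ)+1) ≤ D := by
        have h := mul_le_mul_of_nonneg_right hK1 hkRpos.le
        rw [hDdef]; linarith only [hkRm, h]
      -- piece 1 : (m+1) * (M ξ₀) ≤ c₃/4 |r| |a|^α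
      have ht1 : ((m:ℝ)+1) * (M * ξ₀) ≤ c₃/4 * |r| * |a| ^ α := by
        have e1 : ((m:ℝ)+1) * (M * ξ₀) ≤ D * (M * ξ₀) :=
          mul_le_mul_of_nonneg_right hm1D (by positivity)
        have e2 : D * (M * ξ₀) ≤ |r| * (M * ξ₀) :=
          mul_le_mul_of_nonneg_right hD_le_R (by positivity)
        -- K * (|r| * M * ξ₀) ≤ |r| * |a|^α * ξ₀  and  4 ξ₀ ≤ K c₃ :
        have e3 : K * M * (|r| * ξ₀) ≤ |a| ^ α * (|r| * ξ₀) :=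
          mul_le_mul_of_nonneg_right hKM (by positivity)
        have e4 : (4 * ξ₀) * (|r| * |a| ^ α) ≤ (K * c₃) * (|r| * |a| ^ α) := by
          apply mul_le_mul_of_nonneg_right _ (by positivity)
          linarith only [hKD', mul_nonneg hC₁pos.le (sq_nonneg (C/c+1))]
        -- combine: K * ((m+1) M ξ₀) ≤ K |r| M ξ₀ ≤ |a|^α |r| ξ₀, and
        -- 4 ξ₀ |r| |a|^α ≤ K c₃ |r| |a|^α ; so (m+1) M ξ₀ ≤ (c₃/4) |r| |a|^α after /K
        have e5 : K * (((m:ℝ)+1) * (M * ξ₀)) ≤ K * (|r| * (M * ξ₀)) := by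
          apply mul_le_mul_of_nonneg_left _ hKpos.le
          linarith
        have e6 : K * (c₃/4 * |r| * |a| ^ α) = (K * c₃) * (|r| * |a| ^ α) / 4 := by ring
        rw [← mul_le_mul_iff_right₀ hKpos, e6]
        calc K * (((m:ℝ)+1) * (M * ξ₀)) ≤ K * (|r| * (M * ξ₀)) := e5
        _ = K * M * (|r| * ξ₀) := by ring
        _ ≤ |a| ^ α * (|r| * ξ₀) := e3
        _ = ξ₀ * (|r| * |a| ^ α) := by ring
        _ ≤ (K * c₃) * (|r| * |a| ^ α) / 4 := by linarith only [e4]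
      -- piece 2
      have ht2 : ((m:ℝ)+1) * (C₁ * (|r|/D) ^ (α+1)) ≤ c₃/4 * |r| * |a| ^ α := by
        have hx1 : (|r|/D) ^ (α+1) = |r| ^ (α+1) / D ^ (α+1) :=
          Real.div_rpow (abs_nonneg r) hDpos.le _
        have hx2 : D ^ (2:ℝ) ≤ D ^ (α+1) :=
          Real.rpow_le_rpow_of_exponent_le hD1 (by linarith)
        have hx2' : D^2 ≤ D ^ (α+1) := by
          rw [← Real.rpow_natCast D 2]
          exact_mod_cast hx2
        have hx3 : |r| ^ (α+1) / D ^ (α+1) ≤ |r| ^ (α+1) / D^2 :=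
          div_le_div_of_nonneg_left (Real.rpow_nonneg (abs_nonneg r) _)
            (by positivity) hx2'
        have hx4 : |r| ^ (α+1) = |r| ^ α * |r| := by
          rw [Real.rpow_add hRpos, Real.rpow_one]
        have hx5 : |r| ^ (α+1) ≤ ((C/c+1)^2 * |a| ^ α) * |r| := by
          rw [hx4]
          exact mul_le_mul_of_nonneg_right hβP (abs_nonneg r)
        have hx6 : (|r|/D) ^ (α+1) ≤ ((C/c+1)^2 * |a| ^ α) * |r| / D^2 := by
          calc (|r|/D) ^ (α+1) ≤ |r| ^ (α+1) / D^2 := by rw [hx1]; exact hx3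
          _ ≤ ((C/c+1)^2 * |a| ^ α) * |r| / D^2 :=
            div_le_div_of_nonneg_right hx5 (by positivity)
        have hy1 : ((m:ℝ)+1) * (C₁ * (|r|/D) ^ (α+1))
            ≤ D * (C₁ * (((C/c+1)^2 * |a| ^ α) * |r| / D^2)) := by
          apply mul_le_mul hm1D _ (by positivity) hDpos.le
          exact mul_le_mul_of_nonneg_left hx6 hC₁pos.le
        have hy2 : D * (C₁ * (((C/c+1)^2 * |a| ^ α) * |r| / D^2))
            = C₁ * ((C/c+1)^2 * |a| ^ α) * |r| / D := by
          field_simp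
        have hy3 : C₁ * ((C/c+1)^2 * |a| ^ α) * |r| / D
            ≤ C₁ * ((C/c+1)^2 * |a| ^ α) * |r| / K :=
          div_le_div_of_nonneg_left (by positivity) hKpos hKD
        have hy4 : C₁ * ((C/c+1)^2 * |a| ^ α) * |r| / K ≤ c₃/4 * |r| * |a| ^ α := by
          rw [div_le_iff₀ hKpos]
          have e4 : 4 * (C₁ * (C/c+1)^2) ≤ K * c₃ := by linarith only [hKD', hξ₀]
          linarith only [mul_le_mul_of_nonneg_right e4
            (mul_nonneg (abs_nonneg r) hPpos.le)]
        linarith only [hy1, hy2, hy3, hy4]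
      linarith only [hsum1, ht1, ht2]
  -- orientation and conclusion
  have hΩ₃ : c₃ * |r| * |a| ^ α ≤ |p a + p b + p r| := by
    rcases (abs_pos.1 hRpos).lt_or_gt with hrneg | hrpos
    · have h := main (-a) (-b) (-r) (-S) (by linarith [hsumR]) (by linarith)
        (by rw [abs_neg, abs_neg]; exact hab)
        (by rw [abs_neg, abs_neg]; exact hba)
        (by rw [abs_neg, show -r = |r| by rw [abs_of_neg hrneg]]; exact hrb)
        (by rw [abs_neg, show -r = |r| by rw [abs_of_neg hrneg]]; exact hS)
        (by rw [abs_neg]; exact hbig)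
      rw [abs_neg, hodd, hodd, hodd,
        show -p a + -p b + -p r = -(p a + p b + p r) by ring, abs_neg,
        show -r = |r| by rw [abs_of_neg hrneg]] at h
      exact h
    · have h := main a b r S hsumR hrpos hab hba
        (by have h2 := hrb; rw [abs_of_pos hrpos] at h2; exact h2)
        (by have h2 := hS; rw [abs_of_pos hrpos] at h2; exact h2) hbig
      rw [abs_of_pos hrpos]
      exact h
  have hsplitp : (∑ j, p ((ξ j : ℤ) : ℝ)) = p a + p b + p r + T := by
    rw [hadef, hbdef, hrdef, hTdef]
    exact hsplit _
  rw [hsplitp]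
  have habs2 : |p a + p b + p r| - |T| ≤ |p a + p b + p r + T| := by
    have h0 := abs_add_le (p a + p b + p r + T) (-T)
    rw [show p a + p b + p r + T + -T = p a + p b + p r by ring, abs_neg] at h0
    linarith only [h0]
  linarith only [hΩ₃, hT, habs2]
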